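/- Let V and V' be multisets, each of ℓ vectors in ℝⁿ. If for every subset C ⊆ [n] with |C| ≤ ℓ it holds that |∩_{i∈C} S_V(i)| > 0 if and only if |∩_{i∈C} S_{V'}(i)| > 0, then Maximal(V) = Maximal(V'). That is, knowing for every set C of size at most ℓ whether some vector has non-zero entries on all of C uniquely determines the set of maximal supports. -/

import Mathlib

/-- The support of a vector `u ∈ ℝⁿ`. -/
noncomputable def suppVec {n : ℕ} (u : Fin n → ℝ) : Finset (Fin n) :=
  Finset.univ.filter fun i => u i ≠ 0

/-- `Maximal(V)`: the maximal elements, under set inclusion, of the family of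
supports of the vectors of the multiset `V`. -/
noncomputable def maximalSupports {n ℓ : ℕ} (V : Fin ℓ → Fin n → ℝ) :
    Finset (Finset (Fin n)) :=
  (Finset.univ.image fun j => suppVec (V j)).filter
    fun A => ∀ B ∈ (Finset.univ.image fun j => suppVec (V j)), A ⊆ B → A = B

/-- `|∩_{i ∈ C} S_V(i)|`: the number of vectors in `V` (with multiplicity) having a
non-zero entry in every coordinate of `C`. -/
noncomputable def interCount {n ℓ : ℕ} (V : Fin ℓ → Fin n → ℝ) (C : Finset (Fin n)) : ℕ :=
  (Finset.univ.filter fun j : Fin ℓ => ∀ i ∈ C, V j i ≠ 0).card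

lemma interCount_pos_iff {n ℓ : ℕ} (V : Fin ℓ → Fin n → ℝ) (C : Finset (Fin n)) :
    0 < interCount V C ↔ ∃ j, C ⊆ suppVec (V j) := by
  simp only [interCount, Finset.card_pos, Finset.filter_nonempty_iff, Finset.mem_univ, true_and]
  constructor
  · rintro ⟨j, hj⟩
    exact ⟨j, fun i hi => by simp [suppVec, hj i hi]⟩
  · rintro ⟨j, hj⟩
    exact ⟨j, fun i hi => by simpa [suppVec] using hj hi⟩

lemma key {n ℓ : ℕ} (V V' : Fin ℓ → Fin n → ℝ)
    (h : ∀ C : Finset (Fin n), C.card ≤ ℓ →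
      (0 < interCount V C ↔ 0 < interCount V' C))
    (A : Finset (Fin n)) (hA : ∃ j, A ⊆ suppVec (V j)) :
    ∃ j', A ⊆ suppVec (V' j') := by
  by_contra hc
  push_neg at hc
  have hf : ∀ j' : Fin ℓ, ∃ i ∈ A, i ∉ suppVec (V' j') := by
    intro j'
    obtain ⟨i, hiA, hi⟩ := Finset.not_subset.mp (hc j')
    exact ⟨i, hiA, hi⟩
  choose f hfA hfN using hf
  set C : Finset (Fin n) := Finset.univ.image f with hC
  have hCcard : C.card ≤ ℓ := le_trans Finset.card_image_le (by simp)
  have hCA : C ⊆ A := by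
    intro i hi
    simp only [hC, Finset.mem_image, Finset.mem_univ, true_and] at hi
    obtain ⟨j', rfl⟩ := hi
    exact hfA j'
  obtain ⟨j, hj⟩ := hA
  have hpos : 0 < interCount V C :=
    (interCount_pos_iff V C).mpr ⟨j, hCA.trans hj⟩
  obtain ⟨j', hj'⟩ := (interCount_pos_iff V' C).mp ((h C hCcard).mp hpos)
  exact hfN j' (hj' (by simp [hC]))

lemma maximal_subset {n ℓ : ℕ} (V V' : Fin ℓ → Fin n → ℝ)
    (h : ∀ C : Finset (Fin n), C.card ≤ ℓ →
      (0 < interCount V C ↔ 0 < interCount V' C)) :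
    maximalSupports V ⊆ maximalSupports V' := by
  intro A hA
  simp only [maximalSupports, Finset.mem_filter, Finset.mem_image, Finset.mem_univ,
    true_and] at hA ⊢
  obtain ⟨⟨j, hj⟩, hmax⟩ := hA
  -- A is contained in some support of V'
  obtain ⟨j₀', hAj₀'⟩ := key V V' h A ⟨j, hj ▸ Finset.Subset.refl _⟩
  -- pick a maximal support of V' containing A
  set T : Finset (Finset (Fin n)) :=
    (Finset.univ.image fun j' => suppVec (V' j')).filter fun B => A ⊆ B with hT
  have hTne : T.Nonempty := ⟨suppVec (V' j₀'), by
    simp only [hT, Finset.mem_filter, Finset.mem_image, Finset.mem_univ, true_and]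
    exact ⟨⟨j₀', rfl⟩, hAj₀'⟩⟩
  obtain ⟨B, hBT, hBmax0⟩ := Finset.exists_maximal hTne
  have hBmax : ∀ x ∈ T, ¬ B < x := fun x hx hlt =>
    lt_irrefl B (lt_of_lt_of_le hlt (hBmax0 hx hlt.le))
  simp only [hT, Finset.mem_filter, Finset.mem_image, Finset.mem_univ, true_and] at hBT
  obtain ⟨⟨j₁', hj₁'⟩, hAB⟩ := hBT
  have hBmax' : ∀ D, (∃ j', suppVec (V' j') = D) → B ⊆ D → B = D := by
    intro D hD hBD
    by_contra hne
    exact hBmax D (by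
      simp only [hT, Finset.mem_filter, Finset.mem_image, Finset.mem_univ, true_and]
      exact ⟨hD, hAB.trans hBD⟩) (lt_of_le_of_ne hBD hne)
  -- A = B
  have hsymm : ∀ C : Finset (Fin n), C.card ≤ ℓ →
      (0 < interCount V' C ↔ 0 < interCount V C) := fun C hC => (h C hC).symm
  obtain ⟨j₂, hBj₂⟩ := key V' V hsymm B ⟨j₁', hj₁' ▸ Finset.Subset.refl _⟩
  have hAj₂ : A = suppVec (V j₂) := hmax _ ⟨j₂, rfl⟩ (hAB.trans hBj₂)
  have hAeqB : A = B := le_antisymm hAB (hAj₂ ▸ hBj₂)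
  refine ⟨⟨j₁', by rw [← hAeqB] at hj₁'; exact hj₁'⟩, ?_⟩
  intro D hD hAD
  exact hAeqB.trans (hBmax' D hD (hAeqB ▸ hAD))

/-- Knowing, for every set `C` of size at most `ℓ`, whether some vector has
non-zero entries on all of `C` uniquely determines the set of maximal supports. -/
theorem maximal_support_recovery (n ℓ : ℕ) (V V' : Fin ℓ → Fin n → ℝ)
    (h : ∀ C : Finset (Fin n), C.card ≤ ℓ →
      (0 < interCount V C ↔ 0 < interCount V' C)) :
    maximalSupports V = maximalSupports V' := by
  refine le_antisymm (maximal_subset V V' h) (maximal_subset V' V fun C hC => (h C hC).symm)
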